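/- For q a complex number that is not a root of unity (and q ≠ 0), the kernel of the 9×9 matrix R(−q^3) is exactly one-dimensional, spanned by v = q^{−1/2} e_1⊗e_3 + e_2⊗e_2 + q^{1/2} e_3⊗e_1; equivalently, R(−q^3) has rank 8. -/

import Mathlib

set_option maxHeartbeats 4000000


/-- The 9×9 Izergin–Korepin R-matrix `R(x)` of `U_q(A₂⁽²⁾)`, where `sq = q^{1/2}`
is a chosen square root of `q`. Rows/columns are indexed by `Fin 9`
(0-based; index `(i,j)`, `1 ≤ i,j ≤ 3`, corresponds to `3(i−1)+(j−1)`). -/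
noncomputable def IKR {K : Type*} [Field K] (sq x : K) : Matrix (Fin 9) (Fin 9) K :=
  let q : K := sq ^ 2
  let a : K := q * (x - 1) / (q ^ 2 * x - 1)
  let b : K := q ^ 2 * (q * x + 1) * (x - 1) / ((q ^ 2 * x - 1) * (q ^ 3 * x + 1))
  let c : K := q * (x - 1) / (q ^ 2 * x - 1) +
    (q ^ 2 - 1) * (q ^ 3 + 1) * x / ((q ^ 2 * x - 1) * (q ^ 3 * x + 1))
  let d : K := (q ^ 2 - 1) / (q ^ 2 * x - 1)
  let e : K := (q ^ 2 - 1) * (x - 1) * sq / ((q ^ 2 * x - 1) * (q ^ 3 * x + 1))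
  let f : K := (q ^ 2 - 1) * x / (q ^ 2 * x - 1)
  let g : K := (1 - q ^ 2) * x * (x - 1) * sq ^ 5 / ((q ^ 2 * x - 1) * (q ^ 3 * x + 1))
  let p : K := (q ^ 2 - 1) * (q ^ 3 * x + q * x - q + 1) / ((q ^ 2 * x - 1) * (q ^ 3 * x + 1))
  let s : K := (q ^ 2 - 1) * x * (q ^ 3 * x - q ^ 2 * x + q ^ 2 + 1) /
    ((q ^ 2 * x - 1) * (q ^ 3 * x + 1))
  !![1, 0, 0, 0, 0, 0, 0, 0, 0;
     0, a, 0, d, 0, 0, 0, 0, 0;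
     0, 0, b, 0, e, 0, p, 0, 0;
     0, f, 0, a, 0, 0, 0, 0, 0;
     0, 0, g, 0, c, 0, e, 0, 0;
     0, 0, 0, 0, 0, a, 0, d, 0;
     0, 0, s, 0, g, 0, b, 0, 0;
     0, 0, 0, 0, 0, f, 0, a, 0;
     0, 0, 0, 0, 0, 0, 0, 0, 1]

/-- For `q` not a root of unity, the kernel of the 9×9 matrix `R(−q³)` is exactly
one-dimensional, spanned by `v = q^{−1/2} e₁⊗e₃ + e₂⊗e₂ + q^{1/2} e₃⊗e₁`;
equivalently, `R(−q³)` has rank 8. -/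
theorem IKR_kernel_span (sq : ℂ) (hsq : sq ≠ 0)
    (hroot : ∀ n : ℕ, 0 < n → (sq ^ 2) ^ n ≠ 1) :
    LinearMap.ker (Matrix.mulVecLin (IKR sq (-(sq ^ 2) ^ 3))) =
      Submodule.span ℂ {fun r : Fin 9 =>
        if r = 2 then sq⁻¹ else if r = 4 then 1 else if r = 6 then sq else 0} ∧
    (IKR sq (-(sq ^ 2) ^ 3)).rank = 8 := by
  have hq1 : (sq ^ 2 - 1 : ℂ) ≠ 0 := fun h => hroot 1 one_pos (by linear_combination h)
  have hq2 : (sq ^ 2 + 1 : ℂ) ≠ 0 := fun h => hroot 2 (by norm_num)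
    (by linear_combination (sq ^ 2 - 1) * h)
  have h2p : ((1 : ℂ) + sq ^ 2) ≠ 0 := fun h => hroot 2 (by norm_num)
    (by linear_combination (sq ^ 2 - 1) * h)
  have h3f : (sq ^ 4 + sq ^ 2 + 1 : ℂ) ≠ 0 := fun h => hroot 3 (by norm_num)
    (by linear_combination (sq ^ 2 - 1) * h)
  have h6f : (sq ^ 4 - sq ^ 2 + 1 : ℂ) ≠ 0 := fun h => hroot 6 (by norm_num)
    (by linear_combination ((sq ^ 2 + 1) * (sq ^ 6 - 1)) * h)
  have h10f : (sq ^ 8 - sq ^ 6 + sq ^ 4 - sq ^ 2 + 1 : ℂ) ≠ 0 := fun h => hroot 10 (by norm_num)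
    (by linear_combination ((sq ^ 2 + 1) * (sq ^ 10 - 1)) * h)
  have h5p : ((1 : ℂ) + sq ^ 10) ≠ 0 := fun h => hroot 10 (by norm_num)
    (by linear_combination (sq ^ 10 - 1) * h)
  have h6p : ((1 : ℂ) - sq ^ 12) ≠ 0 := fun h => hroot 6 (by norm_num)
    (by linear_combination -h)
  have hA : (-((sq ^ 2) ^ 2 * (sq ^ 2) ^ 3) - 1 : ℂ) ≠ 0 := fun h => h5p (by linear_combination -h)
  have hB : (-((sq ^ 2) ^ 3 * (sq ^ 2) ^ 3) + 1 : ℂ) ≠ 0 := fun h => h6p (by linear_combination h)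
  have h1n : (-1 - sq ^ 10 : ℂ) ≠ 0 := fun h => h5p (by linear_combination -h)
  have h2n : (1 - sq ^ 12 : ℂ) ≠ 0 := h6p
  have h12n : (-1 - sq ^ 10 + sq ^ 12 + sq ^ 22 : ℂ) ≠ 0 := fun h => mul_ne_zero h1n h2n (by linear_combination h)
  have hK1 : (-(sq ^ 4 * (1 + sq ^ 2) * (1 + sq ^ 10) ^ 2) : ℂ) ≠ 0 :=
    neg_ne_zero.mpr (mul_ne_zero (mul_ne_zero (pow_ne_zero 4 hsq) h2p) (pow_ne_zero 2 h5p))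
  have hKK : ((-(1 + sq ^ 10) ^ 3 * (1 - sq ^ 12) ^ 2) *
      (-(sq ^ 5) * (sq ^ 2 - 1) ^ 2 * (sq ^ 2 + 1) ^ 4 * (sq ^ 4 + sq ^ 2 + 1) *
        (sq ^ 4 - sq ^ 2 + 1) ^ 2 * (sq ^ 8 - sq ^ 6 + sq ^ 4 - sq ^ 2 + 1)) : ℂ) ≠ 0 :=
    mul_ne_zero (mul_ne_zero (neg_ne_zero.mpr (pow_ne_zero 3 h5p)) (pow_ne_zero 2 h6p))
      (mul_ne_zero (mul_ne_zero (mul_ne_zero (mul_ne_zero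
        (mul_ne_zero (neg_ne_zero.mpr (pow_ne_zero 5 hsq)) (pow_ne_zero 2 hq1))
        (pow_ne_zero 4 hq2)) h3f) (pow_ne_zero 2 h6f)) h10f)
  set v : Fin 9 → ℂ := fun r : Fin 9 =>
    if r = 2 then sq⁻¹ else if r = 4 then 1 else if r = 6 then sq else 0 with hv
  have hvker : (IKR sq (-(sq ^ 2) ^ 3)).mulVecLin v = 0 := by
    show (IKR sq (-(sq ^ 2) ^ 3)).mulVec v = 0
    funext i
    fin_cases i
    · show ((1) * 0 + ((0) * 0 + ((0) * sq⁻¹ + ((0) * 0 + ((0) * 1 + ((0) * 0 + ((0) * sq + ((0) * 0 + ((0) * 0 + (0))))))))) : ℂ) = 0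
      norm_num
    · show ((0) * 0 + ((sq ^ 2 * (-(sq ^ 2) ^ 3 - 1) / ((sq ^ 2) ^ 2 * -(sq ^ 2) ^ 3 - 1)) * 0 + ((0) * sq⁻¹ + ((((sq ^ 2) ^ 2 - 1) / ((sq ^ 2) ^ 2 * -(sq ^ 2) ^ 3 - 1)) * 0 + ((0) * 1 + ((0) * 0 + ((0) * sq + ((0) * 0 + ((0) * 0 + (0))))))))) : ℂ) = 0
      norm_num
    · show ((0) * 0 + ((0) * 0 + (((sq ^ 2) ^ 2 * (sq ^ 2 * -(sq ^ 2) ^ 3 + 1) * (-(sq ^ 2) ^ 3 - 1) / (((sq ^ 2) ^ 2 * -(sq ^ 2) ^ 3 - 1) * ((sq ^ 2) ^ 3 * -(sq ^ 2) ^ 3 + 1))) * sq⁻¹ + ((0) * 0 + ((((sq ^ 2) ^ 2 - 1) * (-(sq ^ 2) ^ 3 - 1) * sq / (((sq ^ 2) ^ 2 * -(sq ^ 2) ^ 3 - 1) * ((sq ^ 2) ^ 3 * -(sq ^ 2) ^ 3 + 1))) * 1 + ((0) * 0 + ((((sq ^ 2) ^ 2 - 1) * ((sq ^ 2) ^ 3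 * -(sq ^ 2) ^ 3 + sq ^ 2 * -(sq ^ 2) ^ 3 - sq ^ 2 + 1) / (((sq ^ 2) ^ 2 * -(sq ^ 2) ^ 3 - 1) * ((sq ^ 2) ^ 3 * -(sq ^ 2) ^ 3 + 1))) * sq + ((0) * 0 + ((0) * 0 + (0))))))))) : ℂ) = 0
      field_simp [hA, hB]
      ring
    · show ((0) * 0 + ((((sq ^ 2) ^ 2 - 1) * -(sq ^ 2) ^ 3 / ((sq ^ 2) ^ 2 * -(sq ^ 2) ^ 3 - 1)) * 0 + ((0) * sq⁻¹ + ((sq ^ 2 * (-(sq ^ 2) ^ 3 - 1) / ((sq ^ 2) ^ 2 * -(sq ^ 2) ^ 3 - 1)) * 0 + ((0) * 1 + ((0) * 0 + ((0) * sq + ((0) * 0 + ((0) * 0 + (0))))))))) : ℂ) = 0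
      norm_num
    · show ((0) * 0 + ((0) * 0 + (((1 - (sq ^ 2) ^ 2) * -(sq ^ 2) ^ 3 * (-(sq ^ 2) ^ 3 - 1) * sq ^ 5 / (((sq ^ 2) ^ 2 * -(sq ^ 2) ^ 3 - 1) * ((sq ^ 2) ^ 3 * -(sq ^ 2) ^ 3 + 1))) * sq⁻¹ + ((0) * 0 + (((sq ^ 2 * (-(sq ^ 2) ^ 3 - 1) / ((sq ^ 2) ^ 2 * -(sq ^ 2) ^ 3 - 1) + ((sq ^ 2) ^ 2 - 1) * ((sq ^ 2) ^ 3 + 1) * -(sq ^ 2) ^ 3 / (((sq ^ 2) ^ 2 * -(sq ^ 2) ^ 3 - 1) * ((sq ^ 2) ^ 3 * -(sq ^ 2) ^ 3 + 1)))) * 1 + ((0) * 0 + ((((sq ^ 2) ^ 2 - 1) * (-(sq ^ 2) ^ 3 - 1) * sq / (((sq ^ 2) ^ 2 * -(sq ^ 2) ^ 3 - 1) * ((sq ^ 2) ^ 3 * -(sq ^ 2) ^ 3 + 1))) * sq + ((0) * 0 + ((0) * 0 + (0))))))))) : ℂ) = 0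
      ring_nf
      field_simp [h1n, h2n, h12n]
      ring
    · show ((0) * 0 + ((0) * 0 + ((0) * sq⁻¹ + ((0) * 0 + ((0) * 1 + ((sq ^ 2 * (-(sq ^ 2) ^ 3 - 1) / ((sq ^ 2) ^ 2 * -(sq ^ 2) ^ 3 - 1)) * 0 + ((0) * sq + ((((sq ^ 2) ^ 2 - 1) / ((sq ^ 2) ^ 2 * -(sq ^ 2) ^ 3 - 1)) * 0 + ((0) * 0 + (0))))))))) : ℂ) = 0
      norm_num
    · show ((0) * 0 + ((0) * 0 + ((((sq ^ 2) ^ 2 - 1) * -(sq ^ 2) ^ 3 * ((sq ^ 2) ^ 3 * -(sq ^ 2) ^ 3 - (sq ^ 2) ^ 2 * -(sq ^ 2) ^ 3 + (sq ^ 2) ^ 2 + 1) / (((sq ^ 2) ^ 2 * -(sq ^ 2) ^ 3 - 1) * ((sq ^ 2) ^ 3 * -(sq ^ 2) ^ 3 + 1))) * sq⁻¹ + ((0) * 0 + (((1 - (sq ^ 2) ^ 2) * -(sq ^ 2) ^ 3 * (-(sq ^ 2) ^ 3 - 1) * sq ^ 5 / (((sq ^ 2) ^ 2 * -(sq ^ 2)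 ^ 3 - 1) * ((sq ^ 2) ^ 3 * -(sq ^ 2) ^ 3 + 1))) * 1 + ((0) * 0 + (((sq ^ 2) ^ 2 * (sq ^ 2 * -(sq ^ 2) ^ 3 + 1) * (-(sq ^ 2) ^ 3 - 1) / (((sq ^ 2) ^ 2 * -(sq ^ 2) ^ 3 - 1) * ((sq ^ 2) ^ 3 * -(sq ^ 2) ^ 3 + 1))) * sq + ((0) * 0 + ((0) * 0 + (0))))))))) : ℂ) = 0
      field_simp [hA, hB]
      ring
    · show ((0) * 0 + ((0) * 0 + ((0) * sq⁻¹ + ((0) * 0 + ((0) * 1 + ((((sq ^ 2) ^ 2 - 1) * -(sq ^ 2) ^ 3 / ((sq ^ 2) ^ 2 * -(sq ^ 2) ^ 3 - 1)) * 0 + ((0) * sq + ((sq ^ 2 * (-(sq ^ 2) ^ 3 - 1) / ((sq ^ 2) ^ 2 * -(sq ^ 2) ^ 3 - 1)) * 0 + ((0) * 0 + (0))))))))) : ℂ) = 0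
      norm_num
    · show ((0) * 0 + ((0) * 0 + ((0) * sq⁻¹ + ((0) * 0 + ((0) * 1 + ((0) * 0 + ((0) * sq + ((0) * 0 + ((1) * 0 + (0))))))))) : ℂ) = 0
      norm_num
  have hker : LinearMap.ker (Matrix.mulVecLin (IKR sq (-(sq ^ 2) ^ 3))) =
      Submodule.span ℂ {v} := by
    apply le_antisymm
    · intro w hw
      have hw' : (IKR sq (-(sq ^ 2) ^ 3)).mulVec w = 0 := LinearMap.mem_ker.mp hw
      clear hw
      have e0 : ((1) * w 0 + ((0) * w 1 + ((0) * w 2 + ((0) * w 3 + ((0) * w 4 + ((0) * w 5 + ((0) * w 6 + ((0) * w 7 + ((0) * w 8 + (0))))))))) : ℂ) = 0 := congrFun hw' 0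
      have e1 : ((0) * w 0 + ((sq ^ 2 * (-(sq ^ 2) ^ 3 - 1) / ((sq ^ 2) ^ 2 * -(sq ^ 2) ^ 3 - 1)) * w 1 + ((0) * w 2 + ((((sq ^ 2) ^ 2 - 1) / ((sq ^ 2) ^ 2 * -(sq ^ 2) ^ 3 - 1)) * w 3 + ((0) * w 4 + ((0) * w 5 + ((0) * w 6 + ((0) * w 7 + ((0) * w 8 + (0))))))))) : ℂ) = 0 := congrFun hw' 1
      have e2 : ((0) * w 0 + ((0) * w 1 + (((sq ^ 2) ^ 2 * (sq ^ 2 * -(sq ^ 2) ^ 3 + 1) * (-(sq ^ 2) ^ 3 - 1) / (((sq ^ 2) ^ 2 * -(sq ^ 2) ^ 3 - 1) * ((sq ^ 2) ^ 3 * -(sq ^ 2) ^ 3 + 1))) * w 2 + ((0) * w 3 + ((((sq ^ 2) ^ 2 - 1) * (-(sq ^ 2) ^ 3 - 1) * sq / (((sq ^ 2) ^ 2 * -(sq ^ 2) ^ 3 - 1) * ((sq ^ 2) ^ 3 * -(sq ^ 2) ^ 3 + 1))) * w 4 + ((0) * w 5 + ((((sq ^ 2) ^ 2 - 1) * ((sq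 ^ 2) ^ 3 * -(sq ^ 2) ^ 3 + sq ^ 2 * -(sq ^ 2) ^ 3 - sq ^ 2 + 1) / (((sq ^ 2) ^ 2 * -(sq ^ 2) ^ 3 - 1) * ((sq ^ 2) ^ 3 * -(sq ^ 2) ^ 3 + 1))) * w 6 + ((0) * w 7 + ((0) * w 8 + (0))))))))) : ℂ) = 0 := congrFun hw' 2
      have e3 : ((0) * w 0 + ((((sq ^ 2) ^ 2 - 1) * -(sq ^ 2) ^ 3 / ((sq ^ 2) ^ 2 * -(sq ^ 2) ^ 3 - 1)) * w 1 + ((0) * w 2 + ((sq ^ 2 * (-(sq ^ 2) ^ 3 - 1) / ((sq ^ 2) ^ 2 * -(sq ^ 2) ^ 3 - 1)) * w 3 + ((0) * w 4 + ((0) * w 5 + ((0) * w 6 + ((0) * w 7 + ((0) * w 8 + (0))))))))) : ℂ) = 0 := congrFun hw' 3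
      have e4 : ((0) * w 0 + ((0) * w 1 + (((1 - (sq ^ 2) ^ 2) * -(sq ^ 2) ^ 3 * (-(sq ^ 2) ^ 3 - 1) * sq ^ 5 / (((sq ^ 2) ^ 2 * -(sq ^ 2) ^ 3 - 1) * ((sq ^ 2) ^ 3 * -(sq ^ 2) ^ 3 + 1))) * w 2 + ((0) * w 3 + (((sq ^ 2 * (-(sq ^ 2) ^ 3 - 1) / ((sq ^ 2) ^ 2 * -(sq ^ 2) ^ 3 - 1) + ((sq ^ 2) ^ 2 - 1) * ((sq ^ 2) ^ 3 + 1) * -(sq ^ 2) ^ 3 / (((sq ^ 2) ^ 2 * -(sq ^ 2) ^ 3 - 1) * ((sq ^ 2) ^ 3 * -(sq ^ 2) ^ 3 + 1)))) * w 4 + ((0) * w 5 + ((((sq ^ 2) ^ 2 - 1) * (-(sq ^ 2) ^ 3 - 1) * sq / (((sq ^ 2) ^ 2 * -(sq ^ 2) ^ 3 - 1) * ((sq ^ 2) ^ 3 * -(sq ^ 2) ^ 3 + 1))) * w 6 + ((0) * w 7 + ((0) * w 8 + (0))))))))) : ℂ) = 0 := congrFun hw' 4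
      have e5 : ((0) * w 0 + ((0) * w 1 + ((0) * w 2 + ((0) * w 3 + ((0) * w 4 + ((sq ^ 2 * (-(sq ^ 2) ^ 3 - 1) / ((sq ^ 2) ^ 2 * -(sq ^ 2) ^ 3 - 1)) * w 5 + ((0) * w 6 + ((((sq ^ 2) ^ 2 - 1) / ((sq ^ 2) ^ 2 * -(sq ^ 2) ^ 3 - 1)) * w 7 + ((0) * w 8 + (0))))))))) : ℂ) = 0 := congrFun hw' 5
      have e6 : ((0) * w 0 + ((0) * w 1 + ((((sq ^ 2) ^ 2 - 1) * -(sq ^ 2) ^ 3 * ((sq ^ 2) ^ 3 * -(sq ^ 2) ^ 3 - (sq ^ 2) ^ 2 * -(sq ^ 2) ^ 3 + (sq ^ 2) ^ 2 + 1) / (((sq ^ 2) ^ 2 * -(sq ^ 2) ^ 3 - 1) * ((sq ^ 2) ^ 3 * -(sq ^ 2) ^ 3 + 1))) * w 2 + ((0) * w 3 + (((1 - (sq ^ 2) ^ 2) * -(sq ^ 2) ^ 3 * (-(sq ^ 2) ^ 3 - 1) * sq ^ 5 / (((sq ^ 2) ^ 2 * -(sq ^ 2) ^ 3 - 1) * ((sq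 ^ 2) ^ 3 * -(sq ^ 2) ^ 3 + 1))) * w 4 + ((0) * w 5 + (((sq ^ 2) ^ 2 * (sq ^ 2 * -(sq ^ 2) ^ 3 + 1) * (-(sq ^ 2) ^ 3 - 1) / (((sq ^ 2) ^ 2 * -(sq ^ 2) ^ 3 - 1) * ((sq ^ 2) ^ 3 * -(sq ^ 2) ^ 3 + 1))) * w 6 + ((0) * w 7 + ((0) * w 8 + (0))))))))) : ℂ) = 0 := congrFun hw' 6
      have e7 : ((0) * w 0 + ((0) * w 1 + ((0) * w 2 + ((0) * w 3 + ((0) * w 4 + ((((sq ^ 2) ^ 2 - 1) * -(sq ^ 2) ^ 3 / ((sq ^ 2) ^ 2 * -(sq ^ 2) ^ 3 - 1)) * w 5 + ((0) * w 6 + ((sq ^ 2 * (-(sq ^ 2) ^ 3 - 1) / ((sq ^ 2) ^ 2 * -(sq ^ 2) ^ 3 - 1)) * w 7 + ((0) * w 8 + (0))))))))) : ℂ) = 0 := congrFun hw' 7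
      have e8 : ((0) * w 0 + ((0) * w 1 + ((0) * w 2 + ((0) * w 3 + ((0) * w 4 + ((0) * w 5 + ((0) * w 6 + ((0) * w 7 + ((1) * w 8 + (0))))))))) : ℂ) = 0 := congrFun hw' 8
      clear hw'
      simp only [zero_mul, one_mul, zero_add, add_zero] at e0 e8
      have key1 : (-(sq ^ 4 * (1 + sq ^ 2) * (1 + sq ^ 10) ^ 2) : ℂ) * w 1 = 0 := by
        linear_combination (norm := skip) ((sq ^ 2 * (-(sq ^ 2) ^ 3 - 1)) * (-((sq ^ 2) ^ 2 * (sq ^ 2) ^ 3) - 1) * (-((sq ^ 2) ^ 2 * (sq ^ 2) ^ 3) - 1)) * e1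
          - (((sq ^ 2) ^ 2 - 1) * (-((sq ^ 2) ^ 2 * (sq ^ 2) ^ 3) - 1) * (-((sq ^ 2) ^ 2 * (sq ^ 2) ^ 3) - 1)) * e3
        ring_nf
        field_simp [h1n, h2n, h12n]
        ring
      have key3 : (-(sq ^ 4 * (1 + sq ^ 2) * (1 + sq ^ 10) ^ 2) : ℂ) * w 3 = 0 := by
        linear_combination (norm := skip) ((sq ^ 2 * (-(sq ^ 2) ^ 3 - 1)) * (-((sq ^ 2) ^ 2 * (sq ^ 2) ^ 3) - 1) * (-((sq ^ 2) ^ 2 * (sq ^ 2) ^ 3) - 1)) * e3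
          + ((((sq ^ 2) ^ 2 - 1) * (sq ^ 2) ^ 3) * (-((sq ^ 2) ^ 2 * (sq ^ 2) ^ 3) - 1) * (-((sq ^ 2) ^ 2 * (sq ^ 2) ^ 3) - 1)) * e1
        ring_nf
        field_simp [h1n, h2n, h12n]
        ring
      have key5 : (-(sq ^ 4 * (1 + sq ^ 2) * (1 + sq ^ 10) ^ 2) : ℂ) * w 5 = 0 := by
        linear_combination (norm := skip) ((sq ^ 2 * (-(sq ^ 2) ^ 3 - 1)) * (-((sq ^ 2) ^ 2 * (sq ^ 2) ^ 3) - 1) * (-((sq ^ 2) ^ 2 * (sq ^ 2) ^ 3) - 1)) * e5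
          - (((sq ^ 2) ^ 2 - 1) * (-((sq ^ 2) ^ 2 * (sq ^ 2) ^ 3) - 1) * (-((sq ^ 2) ^ 2 * (sq ^ 2) ^ 3) - 1)) * e7
        ring_nf
        field_simp [h1n, h2n, h12n]
        ring
      have key7 : (-(sq ^ 4 * (1 + sq ^ 2) * (1 + sq ^ 10) ^ 2) : ℂ) * w 7 = 0 := by
        linear_combination (norm := skip) ((sq ^ 2 * (-(sq ^ 2) ^ 3 - 1)) * (-((sq ^ 2) ^ 2 * (sq ^ 2) ^ 3) - 1) * (-((sq ^ 2) ^ 2 * (sq ^ 2) ^ 3) - 1)) * e7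
          + ((((sq ^ 2) ^ 2 - 1) * (sq ^ 2) ^ 3) * (-((sq ^ 2) ^ 2 * (sq ^ 2) ^ 3) - 1) * (-((sq ^ 2) ^ 2 * (sq ^ 2) ^ 3) - 1)) * e5
        ring_nf
        field_simp [h1n, h2n, h12n]
        ring
      have key2 : ((-(1 + sq ^ 10) ^ 3 * (1 - sq ^ 12) ^ 2) *
          (-(sq ^ 5) * (sq ^ 2 - 1) ^ 2 * (sq ^ 2 + 1) ^ 4 * (sq ^ 4 + sq ^ 2 + 1) *
            (sq ^ 4 - sq ^ 2 + 1) ^ 2 * (sq ^ 8 - sq ^ 6 + sq ^ 4 - sq ^ 2 + 1)) : ℂ) *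
          (sq * w 2 - w 4) = 0 := by
        linear_combination (norm := skip) (sq * (-(1 + sq ^ 10) ^ 3 * (1 - sq ^ 12) ^ 2) * (((sq ^ 2) ^ 2 - 1) * (-(sq ^ 2) ^ 3 - 1) * sq) * (((sq ^ 2) ^ 2 * -(sq ^ 2) ^ 3 - 1) * ((sq ^ 2) ^ 3 * -(sq ^ 2) ^ 3 + 1))) * e2
          - (sq * (-(1 + sq ^ 10) ^ 3 * (1 - sq ^ 12) ^ 2) * (((sq ^ 2) ^ 2 - 1) * ((sq ^ 2) ^ 3 * -(sq ^ 2) ^ 3 + sq ^ 2 * -(sq ^ 2) ^ 3 - sq ^ 2 + 1)) * (((sq ^ 2) ^ 2 * -(sq ^ 2) ^ 3 - 1) * ((sq ^ 2) ^ 3 * -(sq ^ 2) ^ 3 + 1))) * e4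
        set_option maxRecDepth 100000 in ring_nf
        field_simp [h1n, h2n, h12n]
        ring
      have key6 : ((-(1 + sq ^ 10) ^ 3 * (1 - sq ^ 12) ^ 2) *
          (-(sq ^ 5) * (sq ^ 2 - 1) ^ 2 * (sq ^ 2 + 1) ^ 4 * (sq ^ 4 + sq ^ 2 + 1) *
            (sq ^ 4 - sq ^ 2 + 1) ^ 2 * (sq ^ 8 - sq ^ 6 + sq ^ 4 - sq ^ 2 + 1)) : ℂ) *
          (w 6 - sq * w 4) = 0 := by
        linear_combination (norm := skip) (-(-(1 + sq ^ 10) ^ 3 * (1 - sq ^ 12) ^ 2) * ((1 - (sq ^ 2) ^ 2) * -(sq ^ 2) ^ 3 * (-(sq ^ 2) ^ 3 - 1) * sq ^ 5) * (((sq ^ 2) ^ 2 * -(sq ^ 2) ^ 3 - 1) * ((sq ^ 2) ^ 3 * -(sq ^ 2) ^ 3 + 1))) * e2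
          + ((-(1 + sq ^ 10) ^ 3 * (1 - sq ^ 12) ^ 2) * ((sq ^ 2) ^ 2 * (sq ^ 2 * -(sq ^ 2) ^ 3 + 1) * (-(sq ^ 2) ^ 3 - 1)) * (((sq ^ 2) ^ 2 * -(sq ^ 2) ^ 3 - 1) * ((sq ^ 2) ^ 3 * -(sq ^ 2) ^ 3 + 1))) * e4
        set_option maxRecDepth 100000 in ring_nf
        field_simp [h1n, h2n, h12n]
        ring
      have hw1 : w 1 = 0 := (mul_eq_zero.mp key1).resolve_left hK1
      have hw3 : w 3 = 0 := (mul_eq_zero.mp key3).resolve_left hK1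
      have hw5 : w 5 = 0 := (mul_eq_zero.mp key5).resolve_left hK1
      have hw7 : w 7 = 0 := (mul_eq_zero.mp key7).resolve_left hK1
      have hw2 : sq * w 2 - w 4 = 0 := (mul_eq_zero.mp key2).resolve_left hKK
      have hw6 : w 6 - sq * w 4 = 0 := (mul_eq_zero.mp key6).resolve_left hKK
      refine Submodule.mem_span_singleton.mpr ⟨w 4, ?_⟩
      funext r
      fin_cases r
      · show w 4 * 0 = w 0
        rw [e0, mul_zero]
      · show w 4 * 0 = w 1
        rw [hw1, mul_zero]
      · show w 4 * sq⁻¹ = w 2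
        have : w 2 = sq⁻¹ * w 4 := by
          field_simp
          linear_combination hw2
        rw [this]; ring
      · show w 4 * 0 = w 3
        rw [hw3, mul_zero]
      · show w 4 * 1 = w 4
        rw [mul_one]
      · show w 4 * 0 = w 5
        rw [hw5, mul_zero]
      · show w 4 * sq = w 6
        have : w 6 = sq * w 4 := by linear_combination hw6
        rw [this]; ring
      · show w 4 * 0 = w 7
        rw [hw7, mul_zero]
      · show w 4 * 0 = w 8
        rw [e8, mul_zero]
    · rw [Submodule.span_le, Set.singleton_subset_iff, SetLike.mem_coe, LinearMap.mem_ker]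
      exact hvker
  refine ⟨hker, ?_⟩
  have hvne : v ≠ 0 := fun h => one_ne_zero (show (1 : ℂ) = 0 from congrFun h 4)
  have hr := LinearMap.finrank_range_add_finrank_ker ((IKR sq (-(sq ^ 2) ^ 3)).mulVecLin)
  rw [hker, finrank_span_singleton hvne, Module.finrank_fin_fun] at hr
  have hrk : (IKR sq (-(sq ^ 2) ^ 3)).rank =
      Module.finrank ℂ (LinearMap.range (IKR sq (-(sq ^ 2) ^ 3)).mulVecLin) := rfl
  omega
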